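/- Let M > 0 be a real number. Then {(y₁,y₂) ∈ ℝ² : (1−a)²·y₁ + a²·y₂ ≥ M for all a ∈ [0,1]} = {(y₁,y₂) ∈ ℝ² : y₁ > M and y₂ ≥ M + M²/(y₁ − M)}. Equivalently, the set {(y₁,y₂) ∈ ℝ² : −cos⁴θ·y₁ − sin⁴θ·y₂ ≤ −M for all θ ∈ [0,π/2]} equals the same set. -/
import Mathlib


open Real Set

lemma key_aux (M : ℝ) (hM : 0 < M) (y₁ y₂ : ℝ) :
    (∀ a ∈ Set.Icc (0 : ℝ) 1, M ≤ (1 - a) ^ 2 * y₁ + a ^ 2 * y₂) ↔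
      (M < y₁ ∧ M + M ^ 2 / (y₁ - M) ≤ y₂) := by
  constructor
  · intro h
    have h0 := h 0 ⟨le_refl 0, zero_le_one⟩
    have h1 := h 1 ⟨zero_le_one, le_refl 1⟩
    simp only [sub_zero, one_pow, pow_two, mul_zero, zero_mul, mul_one, one_mul,
      add_zero, zero_add, sub_self] at h0 h1
    -- h0 : M ≤ y₁, h1 : M ≤ y₂ (after norm_num)
    have hy1 : M ≤ y₁ := by nlinarith
    have hy2 : M ≤ y₂ := by nlinarith
    have hsy1 : M < y₁ := by
      rcases lt_or_eq_of_le hy1 with h' | h'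
      · exact h'
      · exfalso
        set a := min 1 (M / (|M + y₂| + 1)) with ha
        have habs : 0 < |M + y₂| + 1 := by positivity
        have hapos : 0 < a := by
          apply lt_min one_pos
          positivity
        have hale : a ≤ 1 := min_le_left _ _
        have hh := h a ⟨le_of_lt hapos, hale⟩
        rw [← h'] at hh
        have key : 2 * M ≤ a * (M + y₂) := by nlinarith
        have h2 : a * (M + y₂) ≤ a * |M + y₂| := by
          apply mul_le_mul_of_nonneg_left (le_abs_self _) (le_of_lt hapos)
        have h3 : a ≤ M / (|M + y₂| + 1) := min_le_right _ _
        have h4 : a * |M + y₂| ≤ (M / (|M + y₂| + 1)) * (|M + y₂| + 1) := by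
          apply mul_le_mul h3 (by linarith) (abs_nonneg _) (by positivity)
        rw [div_mul_cancel₀] at h4
        · linarith
        · positivity
    have hsy2 : M < y₂ := by
      rcases lt_or_eq_of_le hy2 with h' | h'
      · exact h'
      · exfalso
        set a := min 1 (M / (|M + y₁| + 1)) with ha
        have hapos : 0 < a := by
          apply lt_min one_pos
          positivity
        have hale : a ≤ 1 := min_le_left _ _
        have hh := h (1 - a) ⟨by linarith, by linarith⟩
        rw [← h'] at hh
        have key : 2 * M ≤ a * (M + y₁) := by nlinarith
        have h2 : a * (M + y₁) ≤ a * |M + y₁| := by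
          apply mul_le_mul_of_nonneg_left (le_abs_self _) (le_of_lt hapos)
        have h3 : a ≤ M / (|M + y₁| + 1) := min_le_right _ _
        have h4 : a * |M + y₁| ≤ (M / (|M + y₁| + 1)) * (|M + y₁| + 1) := by
          apply mul_le_mul h3 (by linarith) (abs_nonneg _) (by positivity)
        rw [div_mul_cancel₀] at h4
        · linarith
        · positivity
    refine ⟨hsy1, ?_⟩
    have hs : 0 < y₁ + y₂ := by linarith
    have hastar : y₁ / (y₁ + y₂) ∈ Set.Icc (0 : ℝ) 1 := by
      constructor
      · exact div_nonneg (by linarith) hs.le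
      · rw [div_le_one hs]; linarith
    have hh := h _ hastar
    have hval : (1 - y₁ / (y₁ + y₂)) ^ 2 * y₁ + (y₁ / (y₁ + y₂)) ^ 2 * y₂
        = y₁ * y₂ / (y₁ + y₂) := by
      field_simp
      ring
    rw [hval] at hh
    have hprod : M * (y₁ + y₂) ≤ y₁ * y₂ := (le_div_iff₀ hs).mp hh
    have hden : 0 < y₁ - M := by linarith
    have : M ^ 2 / (y₁ - M) ≤ y₂ - M := by
      rw [div_le_iff₀ hden]; nlinarith
    linarith
  · rintro ⟨hy1, hy2⟩ a ⟨ha0, ha1⟩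
    have hden : 0 < y₁ - M := by linarith
    have hprod : M ^ 2 ≤ (y₁ - M) * (y₂ - M) := by
      have : M ^ 2 / (y₁ - M) ≤ y₂ - M := by linarith
      rw [div_le_iff₀ hden] at this
      linarith [this]
    nlinarith [sq_nonneg ((1 - a) * (y₁ - M) - a * M), sq_nonneg a,
      mul_nonneg (mul_nonneg ha0 (by linarith : (0:ℝ) ≤ 1 - a)) hM.le]

theorem stmt_10 (M : ℝ) (hM : 0 < M) :
    ({y : ℝ × ℝ | ∀ a ∈ Set.Icc (0 : ℝ) 1, M ≤ (1 - a) ^ 2 * y.1 + a ^ 2 * y.2} =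
      {y : ℝ × ℝ | M < y.1 ∧ M + M ^ 2 / (y.1 - M) ≤ y.2}) ∧
    ({y : ℝ × ℝ | ∀ θ ∈ Set.Icc (0 : ℝ) (π / 2),
        -(Real.cos θ ^ 4) * y.1 - Real.sin θ ^ 4 * y.2 ≤ -M} =
      {y : ℝ × ℝ | M < y.1 ∧ M + M ^ 2 / (y.1 - M) ≤ y.2}) := by
  constructor
  · ext y
    exact key_aux M hM y.1 y.2
  · ext y
    rw [Set.mem_setOf_eq, Set.mem_setOf_eq, ← key_aux M hM y.1 y.2]
    constructor
    · intro h a ⟨ha0, ha1⟩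
      have hsa : Real.sqrt a ∈ Set.Icc (-1 : ℝ) 1 :=
        ⟨(by norm_num : (-1:ℝ) ≤ 0).trans (Real.sqrt_nonneg a), by
          rw [show (1:ℝ) = Real.sqrt 1 by simp]
          exact Real.sqrt_le_sqrt ha1⟩
      set θ := Real.arcsin (Real.sqrt a) with hθ
      have hθmem : θ ∈ Set.Icc (0 : ℝ) (π / 2) := by
        constructor
        · exact Real.arcsin_nonneg.mpr (Real.sqrt_nonneg a)
        · exact Real.arcsin_le_pi_div_two _
      have hsin : Real.sin θ = Real.sqrt a := Real.sin_arcsin hsa.1 hsa.2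
      have hsin2 : Real.sin θ ^ 2 = a := by rw [hsin, Real.sq_sqrt ha0]
      have hcos : Real.cos θ ^ 2 = 1 - a := by
        have := Real.sin_sq_add_cos_sq θ
        linarith
      have hh := h θ hθmem
      have e1 : Real.cos θ ^ 4 = (1 - a) ^ 2 := by
        rw [show (4:ℕ) = 2 * 2 by norm_num, pow_mul, hcos]
      have e2 : Real.sin θ ^ 4 = a ^ 2 := by
        rw [show (4:ℕ) = 2 * 2 by norm_num, pow_mul, hsin2]
      rw [e1, e2] at hh
      linarith
    · intro h θ ⟨hθ0, hθ1⟩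
      set a := Real.sin θ ^ 2 with ha
      have ha0 : 0 ≤ a := sq_nonneg _
      have ha1 : a ≤ 1 := Real.sin_sq_le_one θ
      have hh := h a ⟨ha0, ha1⟩
      have hcos : Real.cos θ ^ 2 = 1 - a := by
        have := Real.sin_sq_add_cos_sq θ
        linarith
      have e1 : Real.cos θ ^ 4 = (1 - a) ^ 2 := by
        rw [show (4:ℕ) = 2 * 2 by norm_num, pow_mul, hcos]
      have e2 : Real.sin θ ^ 4 = a ^ 2 := by
        rw [show (4:ℕ) = 2 * 2 by norm_num, pow_mul]
      rw [e1, e2]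
      linarith
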